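/- For every positive integer n and real λ > 0, ∫_{−1}^{x} (1−y²)^{−λ−1/2} ∫_{−1}^{y} (1−z²)^{λ−1/2} C_n^λ(z) dz dy = (C_n^λ(−1) − C_n^λ(x)) / (n(n+2λ)) for all x ∈ (−1,1). -/

import Mathlib

/-- The Gegenbauer (ultraspherical) polynomial `C_n^lam`, defined via the standard
three-term recurrence `(n+2) C_{n+2}(x) = 2 (n+1+lam) x C_{n+1}(x) - (n+2 lam) C_n(x)`,
with `C_0 = 1` and `C_1(x) = 2 lam x`. -/
noncomputable def gegenbauer (lam : ℝ) : ℕ → ℝ → ℝ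
  | 0, _ => 1
  | 1, x => 2 * lam * x
  | (n + 2), x =>
      (2 * ((n : ℝ) + 1 + lam) * x * gegenbauer lam (n + 1) x
        - ((n : ℝ) + 2 * lam) * gegenbauer lam n x) / ((n : ℝ) + 2)

noncomputable def gegD (lam : ℝ) : ℕ → ℝ → ℝ
  | 0, _ => 0
  | 1, _ => 2 * lam
  | (n + 2), x =>
      (2 * ((n : ℝ) + 1 + lam) * (gegenbauer lam (n + 1) x + x * gegD lam (n + 1) x)
        - ((n : ℝ) + 2 * lam) * gegD lam n x) / ((n : ℝ) + 2)

noncomputable def gegE (lam : ℝ) : ℕ → ℝ → ℝ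
  | 0, _ => 0
  | 1, _ => 0
  | (n + 2), x =>
      (2 * ((n : ℝ) + 1 + lam) * (2 * gegD lam (n + 1) x + x * gegE lam (n + 1) x)
        - ((n : ℝ) + 2 * lam) * gegE lam n x) / ((n : ℝ) + 2)

theorem hasDerivAt_gegenbauer (lam : ℝ) :
    ∀ (n : ℕ) (x : ℝ), HasDerivAt (gegenbauer lam n) (gegD lam n x) x
  | 0, x => by simpa [gegenbauer, gegD] using hasDerivAt_const x (1:ℝ)
  | 1, x => by
      have := (hasDerivAt_id x).const_mul (2*lam)
      simpa [gegenbauer, gegD] using this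
  | (n+2), x => by
      have h1 := hasDerivAt_gegenbauer lam (n+1) x
      have h0 := hasDerivAt_gegenbauer lam n x
      have h := ((((hasDerivAt_id x).const_mul (2*((n:ℝ)+1+lam))).mul h1).sub
        (h0.const_mul ((n:ℝ)+2*lam))).div_const ((n:ℝ)+2)
      have e1 : (fun t => (2*((n:ℝ)+1+lam)*t*gegenbauer lam (n+1) t
          - ((n:ℝ)+2*lam)*gegenbauer lam n t)/((n:ℝ)+2)) = gegenbauer lam (n+2) := by
        funext t; simp [gegenbauer]
      simp only [id_eq, Pi.mul_apply, Pi.sub_apply] at h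
      rw [e1] at h
      refine h.congr_deriv ?_
      simp only [gegD, id_eq]
      ring

theorem hasDerivAt_gegD (lam : ℝ) :
    ∀ (n : ℕ) (x : ℝ), HasDerivAt (gegD lam n) (gegE lam n x) x
  | 0, x => by simpa [gegD, gegE] using hasDerivAt_const x (0:ℝ)
  | 1, x => by simpa [gegD, gegE] using hasDerivAt_const x (2*lam)
  | (n+2), x => by
      have hd1 := hasDerivAt_gegD lam (n+1) x
      have hd0 := hasDerivAt_gegD lam n x
      have hg1 := hasDerivAt_gegenbauer lam (n+1) x
      have h := (((hg1.add ((hasDerivAt_id x).mul hd1)).const_mul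
        (2*((n:ℝ)+1+lam))).sub (hd0.const_mul ((n:ℝ)+2*lam))).div_const ((n:ℝ)+2)
      simp only [id_eq, Pi.add_apply, Pi.mul_apply, Pi.sub_apply] at h
      have e1 : (fun t => (2*((n:ℝ)+1+lam)*(gegenbauer lam (n+1) t + t * gegD lam (n+1) t)
          - ((n:ℝ)+2*lam)*gegD lam n t)/((n:ℝ)+2)) = gegD lam (n+2) := by
        funext t; simp [gegD]
      rw [e1] at h
      refine h.congr_deriv ?_
      simp only [gegE]
      ring

theorem gegBC (lam : ℝ) (x : ℝ) : ∀ (n : ℕ),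
    (x * gegD lam (n+1) x - gegD lam n x = ((n:ℝ)+1) * gegenbauer lam (n+1) x) ∧
    (gegD lam (n+1) x - x * gegD lam n x = ((n:ℝ) + 2*lam) * gegenbauer lam n x) := by
  intro n
  induction n with
  | zero => constructor <;> simp [gegD, gegenbauer] <;> ring
  | succ n ih =>
    obtain ⟨hB, hC⟩ := ih
    have h2 : ((n:ℝ)+2) ≠ 0 := by positivity
    have hc2 : ((n:ℝ)+2) * gegenbauer lam (n+2) x
        = 2*((n:ℝ)+1+lam)*x*gegenbauer lam (n+1) x - ((n:ℝ)+2*lam)*gegenbauer lam n x := by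
      simp only [gegenbauer]; field_simp
    have hd2 : ((n:ℝ)+2) * gegD lam (n+2) x
        = 2*((n:ℝ)+1+lam)*(gegenbauer lam (n+1) x + x * gegD lam (n+1) x)
          - ((n:ℝ)+2*lam)*gegD lam n x := by
      simp only [gegD]; field_simp
    constructor
    · -- (B)_{n+2}
      have key : ((n:ℝ)+2) * (x * gegD lam (n+2) x - gegD lam (n+1) x)
          = ((n:ℝ)+2) * ((((n:ℝ)+1)+1) * gegenbauer lam (n+2) x) := by
        linear_combination x * hd2 - ((n:ℝ)+2) * hc2 + 2*((n:ℝ)+1+lam)*x*hB - ((n:ℝ)+2)*hC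
      have := mul_left_cancel₀ h2 key
      push_cast
      linarith [this]
    · -- (C)_{n+1}
      have key : ((n:ℝ)+2) * (gegD lam (n+2) x - x * gegD lam (n+1) x)
          = ((n:ℝ)+2) * ((((n:ℝ)+1) + 2*lam) * gegenbauer lam (n+1) x) := by
        linear_combination hd2 + ((n:ℝ)+2*lam)*hB
      have := mul_left_cancel₀ h2 key
      push_cast
      linarith [this]

theorem gegA (lam : ℝ) (m : ℕ) (t : ℝ) :
    (1 - t^2) * gegD lam (m+1) t
      = -(((m:ℝ)+1)) * t * gegenbauer lam (m+1) t + ((m:ℝ) + 2*lam) * gegenbauer lam m t := by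
  obtain ⟨hB, hC⟩ := gegBC lam t m
  linear_combination (-t) * hB + hC

theorem gegODE (lam : ℝ) (m : ℕ) (x : ℝ) :
    (1 - x^2) * gegE lam (m+1) x
      = (2*lam+1)*x*gegD lam (m+1) x
        - (((m:ℝ)+1)*(((m:ℝ)+1)+2*lam)) * gegenbauer lam (m+1) x := by
  have hfun : (fun t => (1 - t^2) * gegD lam (m+1) t)
      = fun t => -(((m:ℝ)+1)) * t * gegenbauer lam (m+1) t + ((m:ℝ) + 2*lam) * gegenbauer lam m t := by
    funext t; exact gegA lam m t
  have hf : HasDerivAt (fun t => (1 - t^2) * gegD lam (m+1) t)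
      (-(2*x) * gegD lam (m+1) x + (1 - x^2) * gegE lam (m+1) x) x := by
    have h1 : HasDerivAt (fun t : ℝ => 1 - t^2) (-(2*x)) x := by
      simpa using (hasDerivAt_pow 2 x).const_sub 1
    exact h1.mul (hasDerivAt_gegD lam (m+1) x)
  have hg : HasDerivAt (fun t => -(((m:ℝ)+1)) * t * gegenbauer lam (m+1) t
        + ((m:ℝ) + 2*lam) * gegenbauer lam m t)
      (-(((m:ℝ)+1)) * gegenbauer lam (m+1) x + -(((m:ℝ)+1)) * x * gegD lam (m+1) x
        + ((m:ℝ) + 2*lam) * gegD lam m x) x := by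
    have ha := (((hasDerivAt_id x).const_mul (-(((m:ℝ)+1)))).mul
      (hasDerivAt_gegenbauer lam (m+1) x)).add
      ((hasDerivAt_gegenbauer lam m x).const_mul ((m:ℝ) + 2*lam))
    simp only [id_eq, Pi.mul_apply, Pi.add_apply] at ha
    refine ha.congr_deriv ?_
    ring
  rw [hfun] at hf
  have huniq := hf.unique hg
  obtain ⟨hB, _⟩ := gegBC lam x m
  linear_combination huniq - ((m:ℝ) + 2*lam) * hB

theorem hasDerivAt_F (lam : ℝ) (m : ℕ) {z : ℝ} (hz : z ∈ Set.Ioo (-1:ℝ) 1) :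
    HasDerivAt (fun t => (1 - t^2) ^ (lam + 1/2) * gegD lam (m+1) t)
      (-((((m:ℝ)+1) * (((m:ℝ)+1) + 2*lam)) * ((1 - z^2) ^ (lam - 1/2) * gegenbauer lam (m+1) z))) z := by
  have hpos : (0:ℝ) < 1 - z^2 := by
    nlinarith [hz.1, hz.2]
  have h1 : HasDerivAt (fun t : ℝ => 1 - t^2) (-(2*z)) z := by
    simpa using (hasDerivAt_pow 2 z).const_sub 1
  have hrp := h1.rpow_const (p := lam + 1/2) (Or.inl hpos.ne')
  have h := hrp.mul (hasDerivAt_gegD lam (m+1) z)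
  refine h.congr_deriv ?_
  have e1 : (lam + 1/2 - 1) = lam - 1/2 := by ring
  have e2 : (1 - z^2) ^ (lam + 1/2) = (1 - z^2) ^ (lam - 1/2) * (1 - z^2) := by
    rw [show lam + 1/2 = (lam - 1/2) + 1 by ring, Real.rpow_add hpos, Real.rpow_one]
  rw [e1, e2]
  have hode := gegODE lam m z
  linear_combination ((1 - z^2) ^ (lam - 1/2)) * hode

theorem continuous_gegenbauer (lam : ℝ) (n : ℕ) : Continuous (gegenbauer lam n) :=
  continuous_iff_continuousAt.mpr fun x => (hasDerivAt_gegenbauer lam n x).continuousAt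

theorem continuous_gegD (lam : ℝ) (n : ℕ) : Continuous (gegD lam n) :=
  continuous_iff_continuousAt.mpr fun x => (hasDerivAt_gegD lam n x).continuousAt

open MeasureTheory in
set_option maxHeartbeats 1000000 in
theorem inner_integrable (lam : ℝ) (hlam : 0 < lam) (n : ℕ) {y : ℝ}
    (hy : y ∈ Set.Ioo (-1:ℝ) 1) :
    IntervalIntegrable (fun z => (1 - z^2) ^ (lam - 1/2) * gegenbauer lam n z)
      volume (-1) y := by
  set r := lam - 1/2 with hr_def
  have hr : (-1:ℝ) < r := by simp only [hr_def]; linarith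
  obtain ⟨B, hB⟩ := (isCompact_Icc (a := (-1:ℝ)) (b := y)).exists_bound_of_continuousOn
    (continuous_gegenbauer lam n).continuousOn
  set A : ℝ := 2 ^ r + (1 - y) ^ r with hA_def
  have hApos : 0 < A := by
    have h2 : (0:ℝ) < 2 ^ r := Real.rpow_pos_of_pos (by norm_num) r
    have h3 : (0:ℝ) ≤ (1 - y) ^ r := Real.rpow_nonneg (by linarith [hy.2]) r
    linarith
  have i0 : IntervalIntegrable (fun z : ℝ => z ^ r) volume 0 (y + 1) :=
    intervalIntegral.intervalIntegrable_rpow' hr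
  have i1 : IntervalIntegrable (fun z : ℝ => (z + 1) ^ r) volume (-1) y := by
    have h := i0.comp_add_right 1
    norm_num at h
    exact h
  have ig : IntervalIntegrable (fun z : ℝ => (A * B) * (z + 1) ^ r) volume (-1) y :=
    i1.const_mul _
  refine ig.mono_fun' ?_ ?_
  · -- AEStronglyMeasurable on restrict uIoc
    rw [Set.uIoc_of_le (by linarith [hy.1] : (-1:ℝ) ≤ y)]
    refine ContinuousOn.aestronglyMeasurable ?_ measurableSet_Ioc
    intro z hz
    have hz2 : (0:ℝ) < 1 - z^2 := by nlinarith [hz.1, hz.2, hy.2]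
    exact (((continuousAt_const.sub (continuousAt_id.pow 2)).rpow_const
      (Or.inl hz2.ne')).mul (continuous_gegenbauer lam n).continuousAt).continuousWithinAt
  · rw [Set.uIoc_of_le (by linarith [hy.1] : (-1:ℝ) ≤ y)]
    filter_upwards [MeasureTheory.ae_restrict_mem measurableSet_Ioc] with z hz
    have hz1 : (-1:ℝ) < z := hz.1
    have hzy : z ≤ y := hz.2
    have h1z : (0:ℝ) < 1 - z := by linarith [hy.2]
    have h1z' : (0:ℝ) < 1 + z := by linarith
    have hsplit : (1 - z^2 : ℝ) ^ r = (1 - z) ^ r * (1 + z) ^ r := by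
      rw [show (1 - z^2 : ℝ) = (1 - z) * (1 + z) by ring]
      exact Real.mul_rpow h1z.le h1z'.le
    have t1 : (1 - z) ^ r ≤ A := by
      rcases le_or_gt 0 r with h | h
      · have : (1 - z) ^ r ≤ 2 ^ r :=
          Real.rpow_le_rpow h1z.le (by linarith) h
        have h3 : (0:ℝ) ≤ (1 - y) ^ r := Real.rpow_nonneg (by linarith [hy.2]) r
        simp only [hA_def]; linarith
      · have : (1 - z) ^ r ≤ (1 - y) ^ r :=
          Real.rpow_le_rpow_of_nonpos (by linarith [hy.2]) (by linarith) h.le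
        have h2 : (0:ℝ) ≤ 2 ^ r := Real.rpow_nonneg (by norm_num) r
        simp only [hA_def]; linarith
    have t2 : |gegenbauer lam n z| ≤ B := by
      simpa using hB z ⟨hz1.le, hzy⟩
    have hB0 : 0 ≤ B := le_trans (abs_nonneg _) t2
    have n1 : (0:ℝ) ≤ (1 + z) ^ r := Real.rpow_nonneg h1z'.le r
    have n2 : (0:ℝ) ≤ (1 - z) ^ r := Real.rpow_nonneg h1z.le r
    have key : (1 - z^2 : ℝ) ^ r * |gegenbauer lam n z| ≤ A * B * (1 + z) ^ r := by
      rw [hsplit]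
      calc (1 - z) ^ r * (1 + z) ^ r * |gegenbauer lam n z|
          ≤ A * (1 + z) ^ r * B := by
            apply mul_le_mul (mul_le_mul t1 le_rfl n1 hApos.le) t2 (abs_nonneg _)
            positivity
        _ = A * B * (1 + z) ^ r := by ring
    have hnn : (0:ℝ) ≤ 1 - z^2 := by nlinarith
    calc ‖(1 - z^2) ^ (lam - 1/2) * gegenbauer lam n z‖
        = (1 - z^2) ^ r * |gegenbauer lam n z| := by
          rw [Real.norm_eq_abs, abs_mul, abs_of_nonneg (Real.rpow_nonneg hnn r)]
      _ ≤ A * B * (1 + z) ^ r := key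
      _ = A * B * (z + 1) ^ r := by ring_nf

open MeasureTheory in
theorem inner_eq (lam : ℝ) (hlam : 0 < lam) (m : ℕ) {y : ℝ} (hy : y ∈ Set.Ioo (-1:ℝ) 1) :
    (∫ z in (-1:ℝ)..y, (1 - z^2) ^ (lam - 1/2) * gegenbauer lam (m+1) z)
      = -(1 / (((m:ℝ)+1) * (((m:ℝ)+1) + 2*lam)))
          * ((1 - y^2) ^ (lam + 1/2) * gegD lam (m+1) y) := by
  set N : ℝ := ((m:ℝ)+1) * (((m:ℝ)+1) + 2*lam) with hN_def
  have hN : 0 < N := by positivity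
  set f : ℝ → ℝ := fun t => -(1/N) * ((1 - t^2) ^ (lam + 1/2) * gegD lam (m+1) t) with hf_def
  have hcont : ContinuousOn f (Set.Icc (-1) y) := by
    apply Continuous.continuousOn
    apply Continuous.mul continuous_const
    exact ((continuous_const.sub (continuous_pow 2)).rpow_const
      (fun t => Or.inr (by positivity))).mul (continuous_gegD lam (m+1))
  have hderiv : ∀ t ∈ Set.Ioo (-1:ℝ) y, HasDerivWithinAt f
      ((1 - t^2) ^ (lam - 1/2) * gegenbauer lam (m+1) t) (Set.Ioi t) t := by
    intro t ht
    have ht' : t ∈ Set.Ioo (-1:ℝ) 1 := ⟨ht.1, lt_trans ht.2 hy.2⟩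
    have hF := (hasDerivAt_F lam m ht').const_mul (-(1/N))
    have : -(1/N) * (-(N * ((1 - t^2) ^ (lam - 1/2) * gegenbauer lam (m+1) t)))
        = (1 - t^2) ^ (lam - 1/2) * gegenbauer lam (m+1) t := by
      field_simp
    rw [hN_def] at this
    rw [show (-(1/N) * (-((((m:ℝ)+1) * (((m:ℝ)+1) + 2*lam))
      * ((1 - t^2) ^ (lam - 1/2) * gegenbauer lam (m+1) t)))) = _ from this] at hF
    exact hF.hasDerivWithinAt
  have hint := inner_integrable lam hlam (m+1) hy
  have := intervalIntegral.integral_eq_sub_of_hasDeriv_right_of_le hy.1.le hcont hderiv hint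
  rw [this]
  have hfm1 : f (-1) = 0 := by
    simp only [hf_def]
    rw [show (1 - (-1:ℝ)^2) = 0 by norm_num,
      Real.zero_rpow (by positivity : (0:ℝ) < lam + 1/2).ne']
    ring
  rw [hfm1, sub_zero]

theorem iterated_integral_gegenbauer_left (lam : ℝ) (hlam : 0 < lam) (n : ℕ) (hn : 1 ≤ n)
    (x : ℝ) (hx : x ∈ Set.Ioo (-1 : ℝ) 1) :
    (∫ y in (-1 : ℝ)..x, (1 - y ^ 2) ^ (-lam - 1 / 2) *
        ∫ z in (-1 : ℝ)..y, (1 - z ^ 2) ^ (lam - 1 / 2) * gegenbauer lam n z) =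
      (gegenbauer lam n (-1) - gegenbauer lam n x) / ((n : ℝ) * ((n : ℝ) + 2 * lam)) := by
  obtain ⟨m, rfl⟩ : ∃ m, n = m + 1 := ⟨n - 1, by omega⟩
  set N : ℝ := ((m:ℝ)+1) * (((m:ℝ)+1) + 2*lam) with hN_def
  have hN : 0 < N := by positivity
  have hcongr : (∫ y in (-1 : ℝ)..x, (1 - y ^ 2) ^ (-lam - 1 / 2) *
        ∫ z in (-1 : ℝ)..y, (1 - z ^ 2) ^ (lam - 1 / 2) * gegenbauer lam (m+1) z)
      = ∫ y in (-1 : ℝ)..x, -(1/N) * gegD lam (m+1) y := by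
    apply intervalIntegral.integral_congr_ae
    filter_upwards with y hy
    rw [Set.uIoc_of_le hx.1.le] at hy
    have hy' : y ∈ Set.Ioo (-1:ℝ) 1 := ⟨hy.1, lt_of_le_of_lt hy.2 hx.2⟩
    have hpos : (0:ℝ) < 1 - y^2 := by nlinarith [hy'.1, hy'.2]
    rw [inner_eq lam hlam m hy']
    rw [show (1 - y ^ 2) ^ (-lam - 1 / 2) *
        (-(1 / N) * ((1 - y ^ 2) ^ (lam + 1 / 2) * gegD lam (m + 1) y))
      = ((1 - y ^ 2) ^ (-lam - 1 / 2) * (1 - y ^ 2) ^ (lam + 1 / 2))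
        * (-(1 / N) * gegD lam (m + 1) y) by ring]
    rw [← Real.rpow_add hpos, show (-lam - 1/2) + (lam + 1/2) = 0 by ring,
      Real.rpow_zero, one_mul]
  rw [hcongr]
  have hder : ∀ t ∈ Set.uIcc (-1:ℝ) x,
      HasDerivAt (fun s => -(1/N) * gegenbauer lam (m+1) s) (-(1/N) * gegD lam (m+1) t) t :=
    fun t _ => (hasDerivAt_gegenbauer lam (m+1) t).const_mul _
  have hint : IntervalIntegrable (fun t => -(1/N) * gegD lam (m+1) t) MeasureTheory.volume (-1) x :=
    (continuous_const.mul (continuous_gegD lam (m+1))).intervalIntegrable _ _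
  rw [intervalIntegral.integral_eq_sub_of_hasDerivAt hder hint]
  push_cast
  rw [hN_def]
  field_simp
  ring
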